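/- Let H be a finite abelian group and F a field, and let D_H : H × H × H → F be defined by D_H(x,y,z) = 1 if x + y + z = 0 and 0 otherwise. If M ⊆ S × T × U is a tricolored sum-free set in H, then |M| ≤ slicerank(D_H). -/

import Mathlib

open Finset

/-- A slice term is a function of three variables that factors as a
function of two of the variables times a function of the remaining one. -/
def IsSliceTerm {X Y Z 𝔽 : Type*} [Field 𝔽] (t : X → Y → Z → 𝔽) : Prop :=
  (∃ (f : X → Y → 𝔽) (g : Z → 𝔽), ∀ x y z, t x y z = f x y * g z) ∨
  (∃ (f : X → Z → 𝔽) (g : Y → 𝔽), ∀ x y z, t x y z = f x z * g y) ∨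
  (∃ (f : Y → Z → 𝔽) (g : X → 𝔽), ∀ x y z, t x y z = f y z * g x)

/-- The slice rank of a function `X × Y × Z → 𝔽`: the least number of slice
terms needed to express it. -/
noncomputable def sliceRank {X Y Z 𝔽 : Type*} [Field 𝔽] (T : X → Y → Z → 𝔽) : ℕ :=
  sInf {k | ∃ t : Fin k → X → Y → Z → 𝔽,
    (∀ i, IsSliceTerm (t i)) ∧ ∀ x y z, T x y z = ∑ i, t i x y z}

/-- The tensor rank of a function `X × Y × Z → 𝔽`. -/
noncomputable def tensorRank {X Y Z 𝔽 : Type*} [Field 𝔽] (T : X → Y → Z → 𝔽) : ℕ :=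
  sInf {k | ∃ (f : Fin k → X → 𝔽) (g : Fin k → Y → 𝔽) (h : Fin k → Z → 𝔽),
    ∀ x y z, T x y z = ∑ i, f i x * g i y * h i z}

/-- The triangle rank of a function `X × Y × Z → 𝔽`. -/
noncomputable def triangleRank {X Y Z 𝔽 : Type*} [Field 𝔽] (T : X → Y → Z → 𝔽) : ℕ :=
  sInf {k | ∃ (f : Fin k → X → 𝔽) (g : Fin k → Y → 𝔽) (h : Fin k → Z → 𝔽)
      (r : Fin k → Fin k → Fin k → 𝔽),
    ∀ x y z, T x y z = ∑ a : Fin k, ∑ b : Fin k, ∑ c : Fin k,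
      if (a : ℕ) + (b : ℕ) + (c : ℕ) < k then r a b c * f a x * g b y * h c z else 0}

/-- A tricolored sum-free set in an abelian group `H`, encoded as the
3-dimensional perfect matching `M` itself (a finite set of triples):
every triple of `M` sums to zero, and whenever a "mixed" triple
`(p.1, q.2.1, r.2.2)` with `p q r ∈ M` sums to zero we must have `p = q = r`
(this encodes both the perfect-matching property and that no other triple of
`S × T × U` sums to zero, where `S, T, U` are the projections of `M`). -/
def IsTricoloredSumFree {H : Type*} [AddCommGroup H] (M : Finset (H × H × H)) : Prop :=
  (∀ p ∈ M, p.1 + p.2.1 + p.2.2 = 0) ∧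
  (∀ p ∈ M, ∀ q ∈ M, ∀ r ∈ M, p.1 + q.2.1 + r.2.2 = 0 → p = q ∧ q = r)

set_option synthInstance.maxHeartbeats 1000000

open Module Submodule in
private lemma exists_surj_restrict {𝔽 : Type*} [Field 𝔽] {α : Type*} [Fintype α] [DecidableEq α] :
    ∀ (d : ℕ) (W : Submodule 𝔽 (α → 𝔽)), finrank 𝔽 W = d →
    ∃ P : Finset α, P.card = d ∧ ∀ u : α → 𝔽, ∃ h ∈ W, ∀ a ∈ P, h a = u a := by
  intro d
  induction d with
  | zero => intro W _; exact ⟨∅, rfl, fun u => ⟨0, W.zero_mem, by simp⟩⟩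
  | succ d ih =>
    intro W hW
    have hpos : 0 < Module.rank 𝔽 W := by
      rw [← finrank_eq_rank, hW]; exact_mod_cast Nat.succ_pos d
    obtain ⟨w₀, hw₀W, hw₀ne⟩ := exists_mem_ne_zero_of_rank_pos hpos
    obtain ⟨a, ha⟩ : ∃ a, w₀ a ≠ 0 := by
      by_contra h; push_neg at h; exact hw₀ne (funext h)
    -- normalized w with w a = 1
    set w : α → 𝔽 := (w₀ a)⁻¹ • w₀ with hw
    have hwW : w ∈ W := W.smul_mem _ hw₀W
    have hwa : w a = 1 := by simp [hw, inv_mul_cancel₀ ha]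
    -- the evaluation map on W
    let E : W →ₗ[𝔽] 𝔽 := (LinearMap.proj a).comp W.subtype
    have hEsurj : Function.Surjective E := by
      intro c
      exact ⟨⟨c • w, W.smul_mem _ hwW⟩, by simp [E, hwa]⟩
    have hrange : finrank 𝔽 (LinearMap.range E) = 1 := by
      rw [LinearMap.range_eq_top.mpr hEsurj]; simp
    have hker : finrank 𝔽 (LinearMap.ker E) = d := by
      have := LinearMap.finrank_range_add_finrank_ker E
      rw [hrange, hW] at this; omega
    -- transfer to a submodule of (α → 𝔽)
    let W' : Submodule 𝔽 (α → 𝔽) := W ⊓ LinearMap.ker (LinearMap.proj (R := 𝔽) (φ := fun _ : α => 𝔽) a)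
    have hkerE : LinearMap.ker E = (W' ).comap W.subtype := by
      simp [E, W', LinearMap.ker_comp, Submodule.comap_inf, Submodule.comap_subtype_self]
    have hW' : finrank 𝔽 W' = d := by
      rw [← hker, hkerE]
      have hmap : (W'.comap W.subtype).map W.subtype = W' := by
        rw [Submodule.map_comap_subtype]
        exact inf_eq_right.mpr inf_le_left
      rw [← Submodule.finrank_map_subtype_eq W (W'.comap W.subtype), hmap]
    obtain ⟨P', hP'card, hP'⟩ := ih W' hW'
    have haP' : a ∉ P' := by
      intro haP
      obtain ⟨h, hhW', hh⟩ := hP' (fun _ => 1)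
      have h1 : h a = 1 := hh a haP
      have h0 : h a = 0 := hhW'.2
      simp [h0] at h1
    refine ⟨insert a P', by rw [Finset.card_insert_of_notMem haP', hP'card], ?_⟩
    intro u
    obtain ⟨h', hh'W', hh'⟩ := hP' (fun b => u b - u a * w b)
    refine ⟨h' + u a • w, W.add_mem hh'W'.1 (W.smul_mem _ hwW), ?_⟩
    intro b hb
    rcases Finset.mem_insert.mp hb with rfl | hbP'
    · have : h' b = 0 := hh'W'.2
      simp [this, hwa]
    · have := hh' b hbP'
      simp [this]

open Module Submodule in
private lemma exists_large_support {𝔽 : Type*} [Field 𝔽] {α : Type*} [Fintype α] [DecidableEq α]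
    [DecidableEq 𝔽] (W : Submodule 𝔽 (α → 𝔽)) :
    ∃ h ∈ W, finrank 𝔽 W ≤ (Finset.univ.filter (fun a => h a ≠ 0)).card := by
  obtain ⟨P, hPcard, hP⟩ := exists_surj_restrict (finrank 𝔽 W) W rfl
  obtain ⟨h, hhW, hh⟩ := hP (fun _ => 1)
  refine ⟨h, hhW, ?_⟩
  rw [← hPcard]
  apply Finset.card_le_card
  intro a haP
  simp only [Finset.mem_filter, Finset.mem_univ, true_and]
  rw [hh a haP]; exact one_ne_zero

open Module Submodule in
private lemma li_card_le {𝔽 V : Type*} [Field 𝔽] [AddCommGroup V] [Module 𝔽 V]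
    {ι κ : Type*} [Fintype ι] [Fintype κ] (v : ι → V) (w : κ → V)
    (hli : LinearIndependent 𝔽 v) (hsp : ∀ x, v x ∈ Submodule.span 𝔽 (Set.range w)) :
    Fintype.card ι ≤ Fintype.card κ := by
  set N := Submodule.span 𝔽 (Set.range w)
  have : FiniteDimensional 𝔽 N := FiniteDimensional.span_of_finite 𝔽 (Set.finite_range w)
  have hli' : LinearIndependent 𝔽 (fun x => (⟨v x, hsp x⟩ : N)) := by
    apply LinearIndependent.of_comp N.subtype
    exact hli
  calc Fintype.card ι ≤ finrank 𝔽 N := hli'.fintype_card_le_finrank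
    _ ≤ Fintype.card κ := finrank_range_le_card w

open Module Submodule in
private lemma main_bound {H 𝔽 : Type*} [AddCommGroup H] [Fintype H] [DecidableEq H] [Field 𝔽]
    (M : Finset (H × H × H)) (hM : IsTricoloredSumFree M)
    (k : ℕ) (t : Fin k → H → H → H → 𝔽) (ht : ∀ i, IsSliceTerm (t i))
    (hsum : ∀ x y z : H, (if x + y + z = 0 then (1:𝔽) else 0) = ∑ i, t i x y z) :
    M.card ≤ k := by
  classical
  have hchoice : ∀ i, ∃ (c : ℕ) (f : H → H → 𝔽) (g : H → 𝔽), ∀ x y z,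
      t i x y z = if c = 0 then f x y * g z else if c = 1 then f x z * g y else f y z * g x := by
    intro i
    rcases ht i with ⟨f, g, h⟩ | ⟨f, g, h⟩ | ⟨f, g, h⟩
    · exact ⟨0, f, g, by simp [h]⟩
    · exact ⟨1, f, g, by simp [h]⟩
    · exact ⟨2, f, g, by simp [h]⟩
  choose τ f g hspec using hchoice
  set α := {p // p ∈ M} with hα
  let L : (α → 𝔽) →ₗ[𝔽] ({i : Fin k // τ i = 0} → 𝔽) :=
    { toFun := fun φ i => ∑ p : α, φ p * g i.1 (p.1.2.2)
      map_add' := by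
        intro x y; funext i
        simp [add_mul, Finset.sum_add_distrib]
      map_smul' := by
        intro c x; funext i
        simp [Finset.mul_sum, mul_assoc] }
  obtain ⟨φ, hφW, hφsupp⟩ := exists_large_support (LinearMap.ker L)
  have hLφ : ∀ i (hi : τ i = 0), ∑ p : α, φ p * g i (p.1.2.2) = 0 := by
    intro i hi
    have := LinearMap.mem_ker.mp hφW
    exact congrFun this ⟨i, hi⟩
  have hcard : M.card ≤ (Finset.univ.filter (fun i : Fin k => τ i = 0)).card
      + finrank 𝔽 (LinearMap.ker L) := by
    have h1 := LinearMap.finrank_range_add_finrank_ker L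
    have h2 : finrank 𝔽 (α → 𝔽) = M.card := by
      rw [finrank_fintype_fun_eq_card]
      exact Fintype.card_coe M
    have h3 : finrank 𝔽 (LinearMap.range L)
        ≤ (Finset.univ.filter (fun i : Fin k => τ i = 0)).card := by
      have h4 := Submodule.finrank_le (LinearMap.range L)
      rwa [finrank_fintype_fun_eq_card, Fintype.card_subtype] at h4
    omega
  set J : Finset α := Finset.univ.filter (fun p => φ p ≠ 0) with hJ
  set B : H → H → 𝔽 := fun x y => ∑ r : α, (if x + y + r.1.2.2 = 0 then (1:𝔽) else 0) * φ r
    with hB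
  have hBapp : ∀ x y, B x y = ∑ r : α, (if x + y + r.1.2.2 = 0 then (1:𝔽) else 0) * φ r :=
    fun x y => rfl
  have hdiag : ∀ p q : α, B p.1.1 q.1.2.1 = if p = q then φ p else 0 := by
    intro p q
    by_cases hpq : p = q
    · subst hpq
      rw [hBapp, if_pos rfl]
      rw [Finset.sum_eq_single p]
      · rw [if_pos, one_mul]
        exact hM.1 p.1 p.2
      · intro r _ hrp
        rw [if_neg, zero_mul]
        intro hcon
        exact hrp (Subtype.ext ((hM.2 p.1 p.2 p.1 p.2 r.1 r.2 hcon).2.symm))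
      · intro h; exact absurd (Finset.mem_univ p) h
    · rw [hBapp, if_neg hpq]
      apply Finset.sum_eq_zero
      intro r _
      rw [if_neg, zero_mul]
      intro hcon
      exact hpq (Subtype.ext (hM.2 p.1 p.2 q.1 q.2 r.1 r.2 hcon).1)
  set I23 : Finset (Fin k) := Finset.univ.filter (fun i => ¬ τ i = 0) with hI23
  set a : Fin k → H → 𝔽 := fun i x =>
    if τ i = 1 then ∑ r : α, f i x r.1.2.2 * φ r else g i x with ha
  set b : Fin k → H → 𝔽 := fun i y =>
    if τ i = 1 then g i y else ∑ r : α, f i y r.1.2.2 * φ r with hb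
  have hBdecomp : ∀ x y : H, B x y = ∑ i ∈ I23, a i x * b i y := by
    intro x y
    have step1 : B x y = ∑ i : Fin k, ∑ r : α, t i x y r.1.2.2 * φ r := by
      rw [hBapp, Finset.sum_comm]
      apply Finset.sum_congr rfl
      intro r _
      rw [hsum x y r.1.2.2, Finset.sum_mul]
    rw [step1,
      ← Finset.sum_filter_add_sum_filter_not Finset.univ (fun i => τ i = 0)]
    have hzero : ∑ i ∈ Finset.univ.filter (fun i : Fin k => τ i = 0),
        (∑ r : α, t i x y r.1.2.2 * φ r) = 0 := by
      apply Finset.sum_eq_zero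
      intro i hi
      have hτ : τ i = 0 := (Finset.mem_filter.mp hi).2
      calc ∑ r : α, t i x y r.1.2.2 * φ r
          = ∑ r : α, f i x y * (φ r * g i r.1.2.2) := by
            apply Finset.sum_congr rfl
            intro r _
            rw [hspec i x y r.1.2.2, if_pos hτ]
            ring
        _ = f i x y * ∑ r : α, φ r * g i r.1.2.2 := by rw [Finset.mul_sum]
        _ = 0 := by rw [hLφ i hτ, mul_zero]
    rw [hzero, zero_add]
    apply Finset.sum_congr rfl
    intro i hi
    have hτ : ¬ τ i = 0 := (Finset.mem_filter.mp hi).2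
    by_cases h1 : τ i = 1
    · calc ∑ r : α, t i x y r.1.2.2 * φ r
          = ∑ r : α, (f i x r.1.2.2 * φ r) * g i y := by
            apply Finset.sum_congr rfl
            intro r _
            rw [hspec i x y r.1.2.2, if_neg hτ, if_pos h1]
            ring
        _ = (∑ r : α, f i x r.1.2.2 * φ r) * g i y := by rw [Finset.sum_mul]
        _ = a i x * b i y := by rw [ha, hb]; simp [h1]
    · calc ∑ r : α, t i x y r.1.2.2 * φ r
          = ∑ r : α, g i x * (f i y r.1.2.2 * φ r) := by
            apply Finset.sum_congr rfl
            intro r _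
            rw [hspec i x y r.1.2.2, if_neg hτ, if_neg h1]
            ring
        _ = g i x * (∑ r : α, f i y r.1.2.2 * φ r) := by rw [Finset.mul_sum]
        _ = a i x * b i y := by rw [ha, hb]; simp [h1]
  -- linear independence counting
  have hJle : J.card ≤ I23.card := by
    set u : {p // p ∈ J} → ({p // p ∈ J} → 𝔽) :=
      fun p q => B p.1.1.1 q.1.1.2.1 with hu
    set w : {i // i ∈ I23} → ({p // p ∈ J} → 𝔽) :=
      fun i q => b i.1 q.1.1.2.1 with hw
    have hueq : ∀ p q : {p // p ∈ J}, u p q = if p = q then φ p.1 else 0 := by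
      intro p q
      rw [hu]
      dsimp only
      rw [hdiag p.1 q.1]
      by_cases h : p = q
      · subst h; simp
      · rw [if_neg h, if_neg (fun hc => h (Subtype.ext hc))]
    have hli : LinearIndependent 𝔽 u := by
      rw [Fintype.linearIndependent_iff]
      intro c hc p
      have := congrFun hc p
      simp only [Finset.sum_apply, Pi.smul_apply, smul_eq_mul, Pi.zero_apply] at this
      rw [Finset.sum_eq_single p] at this
      · rw [hueq p p, if_pos rfl] at this
        have hφp : φ p.1 ≠ 0 := (Finset.mem_filter.mp p.2).2
        rcases mul_eq_zero.mp this with h | h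
        · exact h
        · exact absurd h hφp
      · intro q _ hqp
        rw [hueq q p, if_neg hqp, mul_zero]
      · intro h; exact absurd (Finset.mem_univ p) h
    have hsp : ∀ p, u p ∈ Submodule.span 𝔽 (Set.range w) := by
      intro p
      have : u p = ∑ i ∈ I23.attach, a i.1 p.1.1.1 • w i := by
        funext q
        rw [hu]
        dsimp only
        rw [hBdecomp]
        rw [← Finset.sum_attach I23 (fun i => a i p.1.1.1 * b i q.1.1.2.1)]
        simp [hw]
      rw [this]
      apply Submodule.sum_mem
      intro i _
      exact Submodule.smul_mem _ _ (Submodule.subset_span ⟨i, rfl⟩)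
    have := li_card_le u w hli hsp
    rwa [Fintype.card_coe, Fintype.card_coe] at this
  have hfin : (Finset.univ.filter (fun i : Fin k => τ i = 0)).card + I23.card = k := by
    rw [hI23, Finset.card_filter_add_card_filter_not, Finset.card_univ, Fintype.card_fin]
  omega

/-- If `M` is a tricolored sum-free set in a finite abelian group `H`, then
`|M| ≤ slicerank D_H`, where `D_H (x,y,z) = [x + y + z = 0]`. -/
theorem card_tricolored_le_sliceRank {H 𝔽 : Type*} [AddCommGroup H] [Fintype H]
    [DecidableEq H] [Field 𝔽] (M : Finset (H × H × H)) (hM : IsTricoloredSumFree M) :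
    M.card ≤ sliceRank (fun x y z : H => if x + y + z = 0 then (1 : 𝔽) else 0) := by
  classical
  have hwit : Fintype.card H ∈ {k | ∃ t : Fin k → H → H → H → 𝔽,
      (∀ i, IsSliceTerm (t i)) ∧ ∀ x y z,
        (fun x y z : H => if x + y + z = 0 then (1 : 𝔽) else 0) x y z = ∑ i, t i x y z} := by
    set e := (Fintype.equivFin H).symm with he
    refine ⟨fun i x y z => (if x + y + e i = 0 then (1:𝔽) else 0) * (if z = e i then 1 else 0),
      fun i => Or.inl ⟨fun x y => if x + y + e i = 0 then (1:𝔽) else 0,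
        fun z => if z = e i then 1 else 0, fun x y z => rfl⟩, ?_⟩
    intro x y z
    simp only
    rw [Fintype.sum_equiv e.symm
      (fun c => (if x + y + e (e.symm c) = 0 then (1:𝔽) else 0) *
        (if z = e (e.symm c) then 1 else 0))
      (fun i => (if x + y + e i = 0 then (1:𝔽) else 0) * (if z = e i then 1 else 0))
      (fun i => rfl) |>.symm]
    simp only [Equiv.apply_symm_apply]
    rw [Finset.sum_eq_single z]
    · simp
    · intro c _ hcz
      rw [if_neg (Ne.symm hcz), mul_zero]
    · intro h; exact absurd (Finset.mem_univ z) h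
  apply le_csInf ⟨_, hwit⟩
  rintro k ⟨t, ht, hsum⟩
  exact main_bound M hM k t ht (fun x y z => hsum x y z)
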